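/- Let (X, μ) be a finite measure space and E a real normed space. Let (φₙ) be a sequence of measurable functions X → ℝ and φ : X → ℝ measurable, with |φₙ| ≤ 1 μ-a.e. for every n and |φ| ≤ 1 μ-a.e., and suppose ∫ φₙ g dμ → ∫ φ g dμ for every integrable g : X → ℝ (weak-* convergence in L^∞). Let uₙ, u, d : X → E be in L²(μ; E) with ‖uₙ − u‖_{L²(μ;E)} → 0. Then ∫ ((φₙ + 1)/2) ‖uₙ − d‖² dμ → ∫ ((φ + 1)/2) ‖u − d‖² dμ. -/

import Mathlib

open MeasureTheory Filter Topology

/-- Continuity of the tracking-type part of the objective (convergence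
(conv:timetracking) in Theorem 4.2): if `φₙ ⇀* φ` in `L^∞` with `|φₙ| ≤ 1`
a.e. and `uₙ → u` in `L²`, then
`∫ ((φₙ+1)/2) ‖uₙ − d‖² → ∫ ((φ+1)/2) ‖u − d‖²`. -/
theorem stmt_4 {X : Type*} [MeasurableSpace X] (μ : Measure X) [IsFiniteMeasure μ]
    {E : Type*} [NormedAddCommGroup E] [NormedSpace ℝ E]
    (φₙ : ℕ → X → ℝ) (φ : X → ℝ)
    (hφₙ_meas : ∀ n, Measurable (φₙ n)) (hφ_meas : Measurable φ)
    (hφₙ_bdd : ∀ n, ∀ᵐ x ∂μ, |φₙ n x| ≤ 1) (hφ_bdd : ∀ᵐ x ∂μ, |φ x| ≤ 1)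
    (hweak : ∀ g : X → ℝ, Integrable g μ →
      Tendsto (fun n => ∫ x, φₙ n x * g x ∂μ) atTop (𝓝 (∫ x, φ x * g x ∂μ)))
    (uₙ : ℕ → X → E) (u d : X → E)
    (huₙ : ∀ n, MemLp (uₙ n) 2 μ) (hu : MemLp u 2 μ) (hd : MemLp d 2 μ)
    (huₙ_conv : Tendsto (fun n => eLpNorm (fun x => uₙ n x - u x) 2 μ) atTop (𝓝 0)) :
    Tendsto (fun n => ∫ x, ((φₙ n x + 1) / 2) * ‖uₙ n x - d x‖ ^ 2 ∂μ) atTop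
      (𝓝 (∫ x, ((φ x + 1) / 2) * ‖u x - d x‖ ^ 2 ∂μ)) := by
  have hw : MemLp (fun x => u x - d x) 2 μ := hu.sub hd
  have hvn : ∀ n, MemLp (fun x => uₙ n x - d x) 2 μ := fun n => (huₙ n).sub hd
  have hfn : ∀ n, MemLp (fun x => uₙ n x - u x) 2 μ := fun n => (huₙ n).sub hu
  have l2int : ∀ (f : X → E), MemLp f 2 μ → Integrable (fun x => ‖f x‖ ^ 2) μ := by
    intro f hf
    have := hf.integrable_norm_rpow two_ne_zero ENNReal.ofNat_ne_top
    simpa [ENNReal.toReal_ofNat, Real.rpow_natCast] using this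
  have hg₀ : Integrable (fun x => ‖u x - d x‖ ^ 2) μ := l2int _ hw
  have hgn : ∀ n, Integrable (fun x => ‖uₙ n x - d x‖ ^ 2) μ := fun n => l2int _ (hvn n)
  have hψn_bdd : ∀ n, ∀ᵐ x ∂μ, ‖(φₙ n x + 1) / 2‖ ≤ 1 := by
    intro n
    filter_upwards [hφₙ_bdd n] with x hx
    rw [Real.norm_eq_abs, abs_le] at *
    constructor <;> [linarith [hx.1]; linarith [hx.2]]
  have int2 : ∀ n, Integrable (fun x => ((φₙ n x + 1) / 2) * ‖u x - d x‖ ^ 2) μ :=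
    fun n => hg₀.bdd_mul
      (((hφₙ_meas n).add measurable_const).div_const 2).aestronglyMeasurable (hψn_bdd n)
  have int1 : ∀ n, Integrable (fun x => ((φₙ n x + 1) / 2) * ‖uₙ n x - d x‖ ^ 2) μ :=
    fun n => (hgn n).bdd_mul
      (((hφₙ_meas n).add measurable_const).div_const 2).aestronglyMeasurable (hψn_bdd n)
  have intD : ∀ n,
      Integrable (fun x => ((φₙ n x + 1) / 2) * (‖uₙ n x - d x‖ ^ 2 - ‖u x - d x‖ ^ 2)) μ :=
    fun n => ((hgn n).sub hg₀).bdd_mul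
      (((hφₙ_meas n).add measurable_const).div_const 2).aestronglyMeasurable (hψn_bdd n)
  -- splitting of the integral
  have key : ∀ n, (∫ x, ((φₙ n x + 1) / 2) * ‖uₙ n x - d x‖ ^ 2 ∂μ)
      = (∫ x, ((φₙ n x + 1) / 2) * (‖uₙ n x - d x‖ ^ 2 - ‖u x - d x‖ ^ 2) ∂μ)
        + ∫ x, ((φₙ n x + 1) / 2) * ‖u x - d x‖ ^ 2 ∂μ := by
    intro n
    rw [← integral_add (intD n) (int2 n)]
    congr 1; funext x; ring
  -- the first term tends to zero
  have hT : Tendsto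
      (fun n => ∫ x, ((φₙ n x + 1) / 2) * (‖uₙ n x - d x‖ ^ 2 - ‖u x - d x‖ ^ 2) ∂μ)
      atTop (𝓝 0) := by
    have hVn : ∀ n, MemLp (fun x => ‖uₙ n x - d x‖ + ‖u x - d x‖) 2 μ :=
      fun n => (hvn n).norm.add hw.norm
    have hpq : (1 : ENNReal) / 1 = 1 / 2 + 1 / 2 := by
      rw [one_div_one, ENNReal.div_add_div_same, one_add_one_eq_two]
      exact (ENNReal.div_self two_ne_zero ENNReal.ofNat_ne_top).symm
    have hprod_int : ∀ n,
        Integrable (fun x => ‖uₙ n x - u x‖ * (‖uₙ n x - d x‖ + ‖u x - d x‖)) μ := by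
      intro n
      have := memLp_one_iff_integrable.mp
        ((hVn n).smul (φ := fun x => ‖uₙ n x - u x‖) (hfn n).norm (r := 1))
      simpa [smul_eq_mul, Pi.mul_def] using this
    have habs : ∀ n,
        |∫ x, ((φₙ n x + 1) / 2) * (‖uₙ n x - d x‖ ^ 2 - ‖u x - d x‖ ^ 2) ∂μ|
        ≤ ∫ x, ‖uₙ n x - u x‖ * (‖uₙ n x - d x‖ + ‖u x - d x‖) ∂μ := by
      intro n
      have step1 : |∫ x, ((φₙ n x + 1) / 2) * (‖uₙ n x - d x‖ ^ 2 - ‖u x - d x‖ ^ 2) ∂μ|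
          ≤ ∫ x, |((φₙ n x + 1) / 2) * (‖uₙ n x - d x‖ ^ 2 - ‖u x - d x‖ ^ 2)| ∂μ := by
        exact norm_integral_le_integral_norm (μ := μ)
          (f := fun x => ((φₙ n x + 1) / 2) * (‖uₙ n x - d x‖ ^ 2 - ‖u x - d x‖ ^ 2))
      refine step1.trans ?_
      refine integral_mono_ae (intD n).abs (hprod_int n) ?_
      filter_upwards [hφₙ_bdd n] with x hx
      have h1 : |(φₙ n x + 1) / 2| ≤ 1 := by
        rw [abs_le] at *
        constructor <;> [linarith [hx.1]; linarith [hx.2]]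
      have h2 : |‖uₙ n x - d x‖ - ‖u x - d x‖| ≤ ‖uₙ n x - u x‖ := by
        have := abs_norm_sub_norm_le (uₙ n x - d x) (u x - d x)
        simpa [sub_sub_sub_cancel_right] using this
      calc |((φₙ n x + 1) / 2) * (‖uₙ n x - d x‖ ^ 2 - ‖u x - d x‖ ^ 2)|
          = |(φₙ n x + 1) / 2| * |‖uₙ n x - d x‖ ^ 2 - ‖u x - d x‖ ^ 2| := abs_mul _ _
        _ ≤ 1 * (|‖uₙ n x - d x‖ - ‖u x - d x‖| * (‖uₙ n x - d x‖ + ‖u x - d x‖)) := by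
            refine mul_le_mul h1 (le_of_eq ?_) (abs_nonneg _) zero_le_one
            rw [show ‖uₙ n x - d x‖ ^ 2 - ‖u x - d x‖ ^ 2
                = (‖uₙ n x - d x‖ - ‖u x - d x‖) * (‖uₙ n x - d x‖ + ‖u x - d x‖) by ring,
              abs_mul,
              abs_of_nonneg (show (0:ℝ) ≤ ‖uₙ n x - d x‖ + ‖u x - d x‖ by positivity)]
        _ ≤ ‖uₙ n x - u x‖ * (‖uₙ n x - d x‖ + ‖u x - d x‖) := by
            rw [one_mul]
            exact mul_le_mul_of_nonneg_right h2 (by positivity)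
    have hHolder : ∀ n,
        (∫ x, ‖uₙ n x - u x‖ * (‖uₙ n x - d x‖ + ‖u x - d x‖) ∂μ)
        ≤ (eLpNorm (fun x => uₙ n x - u x) 2 μ).toReal
          * (eLpNorm (fun x => ‖uₙ n x - d x‖ + ‖u x - d x‖) 2 μ).toReal := by
      intro n
      have h2 : Real.HolderConjugate 2 2 := Real.HolderConjugate.two_two
      have hf2 : MemLp (fun x => ‖uₙ n x - u x‖) (ENNReal.ofReal 2) μ := by
        simpa [ENNReal.ofReal_ofNat] using (hfn n).norm
      have hg2 : MemLp (fun x => ‖uₙ n x - d x‖ + ‖u x - d x‖) (ENNReal.ofReal 2) μ := by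
        simpa [ENNReal.ofReal_ofNat] using hVn n
      have e1 : (eLpNorm (fun x => uₙ n x - u x) 2 μ).toReal
          = (∫ x, ‖uₙ n x - u x‖ ^ (2 : ℝ) ∂μ) ^ (1 / 2 : ℝ) := by
        rw [(hfn n).eLpNorm_eq_integral_rpow_norm two_ne_zero ENNReal.ofNat_ne_top,
          ENNReal.toReal_ofReal (by positivity)]
        norm_num
      have h := integral_mul_norm_le_Lp_mul_Lq (μ := μ) h2 hf2 hg2
      simp only [norm_norm] at h
      have e2 : (eLpNorm (fun x => ‖uₙ n x - d x‖ + ‖u x - d x‖) 2 μ).toReal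
          = (∫ x, ‖‖uₙ n x - d x‖ + ‖u x - d x‖‖ ^ (2 : ℝ) ∂μ) ^ (1 / 2 : ℝ) := by
        rw [(hVn n).eLpNorm_eq_integral_rpow_norm two_ne_zero ENNReal.ofNat_ne_top,
          ENNReal.toReal_ofReal (by positivity)]
        norm_num
      rw [e1, e2]
      calc ∫ x, ‖uₙ n x - u x‖ * (‖uₙ n x - d x‖ + ‖u x - d x‖) ∂μ
          = ∫ x, ‖uₙ n x - u x‖ * ‖‖uₙ n x - d x‖ + ‖u x - d x‖‖ ∂μ := by
            congr 1; funext x; rw [Real.norm_of_nonneg (by positivity)]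
        _ ≤ _ := h
    have hwne : eLpNorm (fun x => u x - d x) 2 μ ≠ ⊤ := hw.eLpNorm_ne_top
    set K : ℝ := (1 + 2 * eLpNorm (fun x => u x - d x) 2 μ).toReal with hK
    have hbound : ∀ᶠ n in atTop,
        |∫ x, ((φₙ n x + 1) / 2) * (‖uₙ n x - d x‖ ^ 2 - ‖u x - d x‖ ^ 2) ∂μ|
        ≤ (eLpNorm (fun x => uₙ n x - u x) 2 μ).toReal * K := by
      filter_upwards [huₙ_conv.eventually_lt_const (by norm_num : (0 : ENNReal) < 1)] with n hn
      have hVle : eLpNorm (fun x => ‖uₙ n x - d x‖ + ‖u x - d x‖) 2 μ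
          ≤ 1 + 2 * eLpNorm (fun x => u x - d x) 2 μ := by
        calc eLpNorm (fun x => ‖uₙ n x - d x‖ + ‖u x - d x‖) 2 μ
            ≤ eLpNorm (fun x => ‖uₙ n x - d x‖) 2 μ + eLpNorm (fun x => ‖u x - d x‖) 2 μ :=
              eLpNorm_add_le (hvn n).norm.aestronglyMeasurable
                hw.norm.aestronglyMeasurable one_le_two
          _ = eLpNorm (fun x => uₙ n x - d x) 2 μ + eLpNorm (fun x => u x - d x) 2 μ := by
              rw [eLpNorm_norm, eLpNorm_norm]
          _ ≤ (eLpNorm (fun x => uₙ n x - u x) 2 μ + eLpNorm (fun x => u x - d x) 2 μ)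
              + eLpNorm (fun x => u x - d x) 2 μ := by
              gcongr
              calc eLpNorm (fun x => uₙ n x - d x) 2 μ
                  = eLpNorm (fun x => (uₙ n x - u x) + (u x - d x)) 2 μ := by
                    congr 1; funext x; abel
                _ ≤ _ := eLpNorm_add_le (hfn n).aestronglyMeasurable
                    hw.aestronglyMeasurable one_le_two
          _ ≤ 1 + 2 * eLpNorm (fun x => u x - d x) 2 μ := by
              rw [two_mul, ← add_assoc]
              gcongr
      refine (habs n).trans ((hHolder n).trans ?_)
      refine mul_le_mul_of_nonneg_left ?_ ENNReal.toReal_nonneg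
      refine ENNReal.toReal_mono ?_ hVle
      exact ENNReal.add_ne_top.mpr ⟨ENNReal.one_ne_top,
        ENNReal.mul_ne_top (by norm_num) hwne⟩
    have hmul : Tendsto (fun n => (eLpNorm (fun x => uₙ n x - u x) 2 μ).toReal * K)
        atTop (𝓝 0) := by
      have h0 : Tendsto (fun n => (eLpNorm (fun x => uₙ n x - u x) 2 μ).toReal)
          atTop (𝓝 0) := by
        simpa [Function.comp_def] using (ENNReal.tendsto_toReal (by simp)).comp huₙ_conv
      simpa using h0.mul_const K
    exact squeeze_zero_norm' (by simpa [Real.norm_eq_abs] using hbound) hmul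
  -- the second term converges by weak-* convergence
  have hSeq : ∀ (ψ : X → ℝ), Measurable ψ → (∀ᵐ x ∂μ, |ψ x| ≤ 1) →
      ∫ x, ((ψ x + 1) / 2) * ‖u x - d x‖ ^ 2 ∂μ
        = ((∫ x, ψ x * ‖u x - d x‖ ^ 2 ∂μ) + ∫ x, ‖u x - d x‖ ^ 2 ∂μ) / 2 := by
    intro ψ hm hb
    have hint : Integrable (fun x => ψ x * ‖u x - d x‖ ^ 2) μ :=
      hg₀.bdd_mul hm.aestronglyMeasurable
        (by filter_upwards [hb] with x hx; simpa [Real.norm_eq_abs] using hx)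
    rw [← integral_add hint hg₀, ← integral_div]
    congr 1; funext x; ring
  have hS : Tendsto (fun n => ∫ x, ((φₙ n x + 1) / 2) * ‖u x - d x‖ ^ 2 ∂μ) atTop
      (𝓝 (∫ x, ((φ x + 1) / 2) * ‖u x - d x‖ ^ 2 ∂μ)) := by
    have heq : (fun n => ∫ x, ((φₙ n x + 1) / 2) * ‖u x - d x‖ ^ 2 ∂μ)
        = fun n => ((∫ x, φₙ n x * ‖u x - d x‖ ^ 2 ∂μ) + ∫ x, ‖u x - d x‖ ^ 2 ∂μ) / 2 :=
      funext fun n => hSeq (φₙ n) (hφₙ_meas n) (hφₙ_bdd n)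
    rw [heq, hSeq φ hφ_meas hφ_bdd]
    exact ((hweak _ hg₀).add tendsto_const_nhds).div_const 2
  have heq2 : (fun n => ∫ x, ((φₙ n x + 1) / 2) * ‖uₙ n x - d x‖ ^ 2 ∂μ)
      = fun n => (∫ x, ((φₙ n x + 1) / 2) * (‖uₙ n x - d x‖ ^ 2 - ‖u x - d x‖ ^ 2) ∂μ)
        + ∫ x, ((φₙ n x + 1) / 2) * ‖u x - d x‖ ^ 2 ∂μ := funext key
  rw [heq2]
  simpa using hT.add hS
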